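/- Let Φ be a crystallographic root system with Hessenberg set 𝔥, and suppose v = s_α w covers w in Bruhat order where α = α_i ∈ Δ is a simple root. If α ∈ N_v^𝔥, then N_v^𝔥 = {α} ∪ s_α N_w^𝔥; if α ∉ N_v^𝔥, then N_v^𝔥 = s_α N_w^𝔥. -/

import Mathlib

open scoped RealInnerProductSpace Pointwise

noncomputable section

/-- Euclidean `n`-space, the ambient space of the root system. -/
abbrev EV (n : ℕ) := EuclideanSpace ℝ (Fin n)

/-- The (orthogonal) reflection in the hyperplane orthogonal to `α`. -/
def sRefl {n : ℕ} (α : EV n) : EV n ≃ₗᵢ[ℝ] EV n :=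
  Submodule.reflection ((ℝ ∙ α)ᗮ)

/-- A finite crystallographic root system in `ℝⁿ`, together with a choice of
positive roots and a base of simple roots. -/
structure BasedRootSystem (n : ℕ) where
  /-- the set of roots -/
  Φ : Set (EV n)
  /-- the positive roots -/
  pos : Set (EV n)
  /-- the base of simple roots -/
  Δ : Set (EV n)
  finite : Φ.Finite
  nonzero : ∀ α ∈ Φ, α ≠ 0
  reduced : ∀ α ∈ Φ, ∀ c : ℝ, c • α ∈ Φ → c = 1 ∨ c = -1
  reflect_mem : ∀ α ∈ Φ, ∀ β ∈ Φ, sRefl α β ∈ Φ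
  cartan_int : ∀ α ∈ Φ, ∀ β ∈ Φ, ∃ m : ℤ, (m : ℝ) = 2 * ⟪α, β⟫ / ⟪α, α⟫
  pos_sub : pos ⊆ Φ
  pos_union : Φ = pos ∪ (-pos)
  pos_disj : pos ∩ (-pos) = ∅
  Δ_sub : Δ ⊆ pos
  Δ_indep : LinearIndependent ℝ ((↑) : Δ → EV n)
  Δ_span : Submodule.span ℝ Δ = ⊤
  pos_combo : ∀ α ∈ pos, α ∈ AddSubmonoid.closure Δ

namespace BasedRootSystem

variable {n : ℕ} (R : BasedRootSystem n)

/-- The root order: `α ≺ β` iff `β - α` is a nonempty sum of positive roots. -/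
def prec (a b : EV n) : Prop :=
  a ≠ b ∧ b - a ∈ AddSubmonoid.closure R.pos

/-- An ideal of the positive roots: upward closed for the root order. -/
def IsIdeal (I : Set (EV n)) : Prop :=
  I ⊆ R.pos ∧ ∀ β ∈ I, ∀ α ∈ R.pos, R.prec β α → α ∈ I

/-- A Hessenberg set: the complement in `Φ⁺` of an ideal. -/
def IsHess (h : Set (EV n)) : Prop :=
  h ⊆ R.pos ∧ R.IsIdeal (R.pos \ h)

/-- The Weyl group, generated by the reflections in the roots. -/
def Weyl : Subgroup (EV n ≃ₗᵢ[ℝ] EV n) :=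
  Subgroup.closure {g | ∃ α ∈ R.Φ, g = sRefl α}

/-- Application of a Weyl group element to a vector. -/
def ap (w : R.Weyl) (x : EV n) : EV n := (w : EV n ≃ₗᵢ[ℝ] EV n) x

/-- The inversion set `N_w = {α ∈ Φ⁺ : w⁻¹ α ∈ Φ⁻}`. -/
def N (w : R.Weyl) : Set (EV n) := {α | α ∈ R.pos ∧ R.ap w⁻¹ α ∈ -R.pos}

/-- The length of a Weyl group element, `ℓ(w) = |N_w|`. -/
def len (w : R.Weyl) : ℕ := (R.N w).ncard

/-- The `𝔥`-inversion set `N_w^𝔥 = {α ∈ Φ⁺ : w⁻¹ α ∈ -𝔥}`. -/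
def Nh (h : Set (EV n)) (w : R.Weyl) : Set (EV n) :=
  {α | α ∈ R.pos ∧ R.ap w⁻¹ α ∈ -h}

/-- `ℓ_𝔥(w) = |N_w^𝔥|`, the number of Hessenberg edges ending at `w`. -/
def lenh (h : Set (EV n)) (w : R.Weyl) : ℕ := (R.Nh h w).ncard

/-- `v` covers `w` in Bruhat order: `v = s_α w` with `ℓ(v) = ℓ(w) + 1`. -/
def Covers (v w : R.Weyl) : Prop :=
  ∃ α ∈ R.pos, (v : EV n ≃ₗᵢ[ℝ] EV n) = sRefl α * (w : EV n ≃ₗᵢ[ℝ] EV n) ∧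
    R.len v = R.len w + 1

/-- Bruhat order: the transitive closure of the relations `w < s_α w`
whenever the length increases. -/
def bruhatLt (w v : R.Weyl) : Prop :=
  Relation.TransGen (fun u u' : R.Weyl =>
    ∃ α ∈ R.pos, (u' : EV n ≃ₗᵢ[ℝ] EV n) = sRefl α * (u : EV n ≃ₗᵢ[ℝ] EV n) ∧
      R.len u < R.len u') w v

/-- The edge relation of the Hessenberg graph `Γ_𝔥`: `u → w` when `w = s_α u`
with `α ∈ Φ⁺` and `w⁻¹ α ∈ -𝔥`. -/
def Edge (h : Set (EV n)) (u w : R.Weyl) : Prop :=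
  ∃ α ∈ R.pos, (w : EV n ≃ₗᵢ[ℝ] EV n) = sRefl α * (u : EV n ≃ₗᵢ[ℝ] EV n) ∧
    R.ap w⁻¹ α ∈ -h

/-- The flow-up (reachability) order of the Hessenberg graph. -/
def flowLe (h : Set (EV n)) (x y : R.Weyl) : Prop :=
  Relation.ReflTransGen (R.Edge h) x y

/-- The strict flow-up order. -/
def flowLt (h : Set (EV n)) (x y : R.Weyl) : Prop :=
  Relation.TransGen (R.Edge h) x y

/-- The linear polynomial in `ℝ[Δ] = ℝ[x₁,…,xₙ]` corresponding to a vector. -/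
def lin (α : EV n) : MvPolynomial (Fin n) ℝ :=
  ∑ i, MvPolynomial.C (α i) * MvPolynomial.X i

/-- The action of an isometry `w` on the polynomial ring, induced by the
linear action on the ambient space: it sends `lin α` to `lin (w α)`. -/
def polyAct (w : EV n ≃ₗᵢ[ℝ] EV n) :
    MvPolynomial (Fin n) ℝ →ₐ[ℝ] MvPolynomial (Fin n) ℝ :=
  MvPolynomial.aeval fun i => lin (w (EuclideanSpace.single i 1))

/-- The dot action of the Weyl group on `Maps(W, ℝ[Δ])`:
`(w · P)(u) = w (P (w⁻¹ u))`. -/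
def dot (w : R.Weyl) (P : R.Weyl → MvPolynomial (Fin n) ℝ) :
    R.Weyl → MvPolynomial (Fin n) ℝ :=
  fun u => polyAct (w : EV n ≃ₗᵢ[ℝ] EV n) (P (w⁻¹ * u))

/-- Membership in the GKM ring `H_T^*(𝔥)`: the GKM conditions
`P(w) - P(s_α w) ∈ ⟨α⟩` along all edges of `Γ_𝔥`. -/
def GKM (h : Set (EV n)) (P : R.Weyl → MvPolynomial (Fin n) ℝ) : Prop :=
  ∀ u w : R.Weyl, ∀ α ∈ R.pos,
    (w : EV n ≃ₗᵢ[ℝ] EV n) = sRefl α * (u : EV n ≃ₗᵢ[ℝ] EV n) →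
    R.ap w⁻¹ α ∈ -h → P w - P u ∈ Ideal.span {lin α}

/-- The product `∏_{α ∈ S} α` (over `S ∩ Φ`) as an element of `ℝ[Δ]`. -/
def prodRoots (S : Set (EV n)) : MvPolynomial (Fin n) ℝ :=
  ∏ α ∈ (R.finite.inter_of_right S).toFinset, lin α

/-- A flow-up class at `x`: homogeneous of degree `ℓ_𝔥(x)`, with
`P(x) = ∏_{α ∈ N_x^𝔥} α`, supported on the flow-up of `x`, and satisfying the
GKM conditions. -/
def IsFlowUp (h : Set (EV n)) (x : R.Weyl)
    (P : R.Weyl → MvPolynomial (Fin n) ℝ) : Prop :=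
  R.GKM h P ∧ (∀ y, (P y).IsHomogeneous (R.lenh h x)) ∧
    P x = R.prodRoots (R.Nh h x) ∧ ∀ y, P y ≠ 0 → R.flowLe h x y

/-- Irreducibility: the roots admit no splitting into two nonempty mutually
orthogonal parts. -/
def IsIrreducible : Prop :=
  ∀ Ψ Ψ' : Set (EV n), Ψ ∪ Ψ' = R.Φ → (∀ a ∈ Ψ, ∀ b ∈ Ψ', ⟪a, b⟫ = 0) →
    Ψ = ∅ ∨ Ψ' = ∅

/-- `γ` is the highest root: `α ⪯ γ` for every root `α`. -/
def IsHighest (γ : EV n) : Prop :=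
  γ ∈ R.pos ∧ ∀ α ∈ R.Φ, α = γ ∨ R.prec α γ

end BasedRootSystem

namespace BasedRootSystem

variable {n : ℕ} (R : BasedRootSystem n)

open scoped Classical

lemma sRefl_self (α : EV n) : sRefl α α = -α :=
  Submodule.reflection_orthogonalComplement_singleton_eq_neg α

lemma sRefl_symm_eq (α : EV n) : (sRefl α).symm = sRefl α := Submodule.reflection_symm

lemma sRefl_sRefl (α x : EV n) : sRefl α (sRefl α x) = x := by
  conv_lhs => rw [← sRefl_symm_eq α]
  exact (sRefl α).symm_apply_apply x

lemma sRefl_sub (α x : EV n) : ∃ c : ℝ, sRefl α x = x - c • α := by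
  have h1 : x - ((ℝ ∙ α)ᗮ).starProjection x ∈ ((ℝ ∙ α)ᗮ)ᗮ :=
    Submodule.sub_starProjection_mem_orthogonal x
  rw [Submodule.orthogonal_orthogonal] at h1
  obtain ⟨c, hc⟩ := Submodule.mem_span_singleton.mp h1
  refine ⟨2 * c, ?_⟩
  have hra : sRefl α x = 2 • ((ℝ ∙ α)ᗮ).starProjection x - x :=
    Submodule.reflection_apply x
  have hp : ((ℝ ∙ α)ᗮ).starProjection x = x - c • α := by
    rw [hc]; abel
  rw [hra, hp]
  module

lemma ap_mem_Φ (u : R.Weyl) {β : EV n} (hβ : β ∈ R.Φ) : R.ap u β ∈ R.Φ := by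
  have key : ∀ g : EV n ≃ₗᵢ[ℝ] EV n, g ∈ R.Weyl → ∀ x ∈ R.Φ, g x ∈ R.Φ := by
    intro g hg
    induction hg using Subgroup.closure_induction with
    | mem x hx =>
      obtain ⟨a, ha, rfl⟩ := hx
      exact fun y hy => R.reflect_mem a ha y hy
    | one => exact fun y hy => hy
    | mul x y hx hy ihx ihy =>
      intro z hz
      rw [LinearIsometryEquiv.coe_mul]
      exact ihx _ (ihy z hz)
    | inv x hx ih =>
      intro z hz
      have himg : x '' R.Φ = R.Φ := by
        apply Set.eq_of_subset_of_ncard_le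
        · rintro _ ⟨y, hy, rfl⟩; exact ih y hy
        · rw [Set.ncard_image_of_injective _ x.injective]
        · exact R.finite
      rw [LinearIsometryEquiv.coe_inv]
      rw [← himg] at hz
      obtain ⟨y, hy, rfl⟩ := hz
      rwa [x.symm_apply_apply]
  exact key _ u.2 β hβ

/-- The simple roots form a basis. -/
def bΔ : Module.Basis R.Δ ℝ (EV n) :=
  Module.Basis.mk R.Δ_indep (by rw [Subtype.range_coe, R.Δ_span])

lemma bΔ_apply (δ : R.Δ) : R.bΔ δ = (δ : EV n) := by
  rw [bΔ, Module.Basis.mk_apply]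

lemma repr_nonneg {x : EV n} (hx : x ∈ AddSubmonoid.closure R.Δ) (δ : R.Δ) :
    0 ≤ R.bΔ.repr x δ := by
  induction hx using AddSubmonoid.closure_induction with
  | mem y hy =>
    have hy' : y = R.bΔ ⟨y, hy⟩ := (R.bΔ_apply ⟨y, hy⟩).symm
    rw [hy', Module.Basis.repr_self, Finsupp.single_apply]
    split <;> norm_num
  | zero => simp
  | add a b _ _ iha ihb =>
    rw [map_add, Finsupp.add_apply]
    positivity

lemma repr_simple {α : EV n} (hα : α ∈ R.Δ) :
    R.bΔ.repr α = Finsupp.single ⟨α, hα⟩ 1 := by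
  have h0 := R.bΔ.repr_self ⟨α, hα⟩
  rw [R.bΔ_apply] at h0
  exact h0

/-- Key lemma: a simple reflection permutes the positive roots other than `α`. -/
lemma simple_refl_pos {α β : EV n} (hα : α ∈ R.Δ) (hβ : β ∈ R.pos) (hne : β ≠ α) :
    sRefl α β ∈ R.pos := by
  have hαΦ : α ∈ R.Φ := R.pos_sub (R.Δ_sub hα)
  have hβΦ : β ∈ R.Φ := R.pos_sub hβ
  have hγΦ : sRefl α β ∈ R.Φ := R.reflect_mem α hαΦ β hβΦ
  rw [R.pos_union] at hγΦ
  rcases hγΦ with h | h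
  · exact h
  exfalso
  have hng : -(sRefl α β) ∈ R.pos := by rwa [Set.mem_neg] at h
  obtain ⟨c, hc⟩ := sRefl_sub α β
  have hsum : β + -(sRefl α β) = c • α := by rw [hc]; abel
  have hβcl := R.pos_combo β hβ
  have hgcl := R.pos_combo _ hng
  set δα : R.Δ := ⟨α, hα⟩ with hδα
  have hcoord : ∀ δ : R.Δ, δ ≠ δα → R.bΔ.repr β δ = 0 := by
    intro δ hδ
    have h1 : R.bΔ.repr β δ + R.bΔ.repr (-(sRefl α β)) δ = c * R.bΔ.repr α δ := by
      rw [← Finsupp.add_apply, ← map_add, hsum, map_smul, Finsupp.smul_apply, smul_eq_mul]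
    rw [R.repr_simple hα, Finsupp.single_apply, if_neg (fun hh => hδ hh.symm),
      mul_zero] at h1
    have h2 := R.repr_nonneg hβcl δ
    have h3 := R.repr_nonneg hgcl δ
    linarith
  have hrep : R.bΔ.repr β = Finsupp.single δα (R.bΔ.repr β δα) := by
    ext δ
    rw [Finsupp.single_apply]
    by_cases hδ : δ = δα
    · subst hδ; simp
    · rw [hcoord δ hδ, if_neg (fun hh => hδ hh.symm)]
  have hβα : β = (R.bΔ.repr β δα) • α := by
    have h0 : R.bΔ.repr.symm (R.bΔ.repr β) = β := R.bΔ.repr.symm_apply_apply β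
    rw [hrep, Module.Basis.repr_symm_apply, Finsupp.linearCombination_single, R.bΔ_apply] at h0
    exact h0.symm
  have hΦ' : (R.bΔ.repr β δα) • α ∈ R.Φ := by rw [← hβα]; exact hβΦ
  rcases R.reduced α hαΦ _ hΦ' with h1 | h1
  · rw [h1, one_smul] at hβα; exact hne hβα
  · have := R.repr_nonneg hβcl δα
    rw [h1] at this; linarith

lemma ap_neg (u : R.Weyl) (x : EV n) : R.ap u (-x) = -R.ap u x := by
  show (u : EV n ≃ₗᵢ[ℝ] EV n) (-x) = -(u : EV n ≃ₗᵢ[ℝ] EV n) x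
  exact map_neg _ x

lemma ap_inv_cover {v w : R.Weyl} {α : EV n}
    (hv : (v : EV n ≃ₗᵢ[ℝ] EV n) = sRefl α * (w : EV n ≃ₗᵢ[ℝ] EV n)) (x : EV n) :
    R.ap v⁻¹ x = R.ap w⁻¹ (sRefl α x) := by
  have hs : (sRefl α)⁻¹ = sRefl α := sRefl_symm_eq α
  have h1 : ((v⁻¹ : R.Weyl) : EV n ≃ₗᵢ[ℝ] EV n) =
      ((w⁻¹ : R.Weyl) : EV n ≃ₗᵢ[ℝ] EV n) * sRefl α := by
    rw [show ((v⁻¹ : R.Weyl) : EV n ≃ₗᵢ[ℝ] EV n) = ((v : R.Weyl) : EV n ≃ₗᵢ[ℝ] EV n)⁻¹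
      from rfl, hv, mul_inv_rev, hs]
    rfl
  show ((v⁻¹ : R.Weyl) : EV n ≃ₗᵢ[ℝ] EV n) x = _
  rw [h1, LinearIsometryEquiv.coe_mul, Function.comp_apply]
  rfl

end BasedRootSystem

open BasedRootSystem in
/-- If `v = s_α w` covers `w` with `α` a simple root, then
`N_v^𝔥 = {α} ∪ s_α N_w^𝔥` when `α ∈ N_v^𝔥`, and `N_v^𝔥 = s_α N_w^𝔥` otherwise. -/
theorem hinv_cover_simple {n : ℕ} (R : BasedRootSystem n) (h : Set (EV n))
    (hh : R.IsHess h) (v w : R.Weyl) (α : EV n) (hα : α ∈ R.Δ)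
    (hv : (v : EV n ≃ₗᵢ[ℝ] EV n) = sRefl α * (w : EV n ≃ₗᵢ[ℝ] EV n))
    (hlen : R.len v = R.len w + 1) :
    (α ∈ R.Nh h v → R.Nh h v = {α} ∪ ⇑(sRefl α) '' R.Nh h w) ∧
    (α ∉ R.Nh h v → R.Nh h v = ⇑(sRefl α) '' R.Nh h w) := by
  classical
  have hαpos : α ∈ R.pos := R.Δ_sub hα
  have hαΦ : α ∈ R.Φ := R.pos_sub hαpos
  have hdisj : ∀ x, x ∈ R.pos → x ∈ -R.pos → False := by
    intro x h1 h2
    have hx : x ∈ R.pos ∩ (-R.pos) := ⟨h1, h2⟩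
    rw [R.pos_disj] at hx
    exact hx
  have hapinv : ∀ x, R.ap v⁻¹ x = R.ap w⁻¹ (sRefl α x) := R.ap_inv_cover hv
  have hne2 : ∀ μ ∈ R.pos, sRefl α μ ≠ α := by
    intro μ hμ hcontra
    have hμα : μ = -α := by
      have := sRefl_sRefl α μ
      rw [hcontra, sRefl_self] at this
      exact this.symm
    apply hdisj μ hμ
    rw [hμα, Set.mem_neg, neg_neg]
    exact hαpos
  -- the length condition forces `w⁻¹ α` to be positive
  have hwα : R.ap w⁻¹ α ∈ R.pos := by
    have hΦ : R.ap w⁻¹ α ∈ R.Φ := R.ap_mem_Φ _ hαΦ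
    rw [R.pos_union] at hΦ
    rcases hΦ with h' | h'
    · exact h'
    exfalso
    have hNwfin : (R.N w).Finite := R.finite.subset fun x hx => R.pos_sub hx.1
    have hαNw : α ∈ R.N w := ⟨hαpos, h'⟩
    have hNv : R.N v = ⇑(sRefl α) '' (R.N w \ {α}) := by
      ext μ
      constructor
      · rintro ⟨hμp, hμn⟩
        have hμα : μ ≠ α := by
          rintro rfl
          rw [hapinv, sRefl_self, R.ap_neg] at hμn
          apply hdisj (R.ap w⁻¹ μ) _ h'
          rw [Set.mem_neg] at hμn
          rwa [neg_neg] at hμn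
        refine ⟨sRefl α μ, ⟨⟨R.simple_refl_pos hα hμp hμα, ?_⟩, ?_⟩, sRefl_sRefl α μ⟩
        · rw [← hapinv]; exact hμn
        · exact hne2 μ hμp
      · rintro ⟨β, ⟨⟨hβp, hβn⟩, hβα⟩, rfl⟩
        have hβα' : β ≠ α := hβα
        refine ⟨R.simple_refl_pos hα hβp hβα', ?_⟩
        rw [hapinv, sRefl_sRefl]
        exact hβn
    have hcard : (R.N v).ncard = (R.N w).ncard - 1 := by
      rw [hNv, Set.ncard_image_of_injective _ (sRefl α).injective,
        Set.ncard_diff_singleton_of_mem hαNw]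
    have hpos : 0 < (R.N w).ncard := by
      rw [Set.ncard_pos hNwfin]
      exact ⟨α, hαNw⟩
    have hlen' : (R.N v).ncard = (R.N w).ncard + 1 := hlen
    omega
  have hhneg : ∀ x, x ∈ (-h : Set (EV n)) → x ∈ -R.pos := by
    intro x hx
    rw [Set.mem_neg] at hx ⊢
    exact hh.1 hx
  -- characterization of the image set
  have himg : ∀ μ, μ ∈ ⇑(sRefl α) '' R.Nh h w ↔
      (μ ∈ R.pos ∧ μ ≠ α ∧ R.ap v⁻¹ μ ∈ -h) := by
    intro μ
    constructor
    · rintro ⟨β, ⟨hβp, hβn⟩, rfl⟩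
      have hβα : β ≠ α := by
        rintro rfl
        exact hdisj _ hwα (hhneg _ hβn)
      refine ⟨R.simple_refl_pos hα hβp hβα, hne2 β hβp, ?_⟩
      rw [hapinv, sRefl_sRefl]
      exact hβn
    · rintro ⟨hμp, hμα, hμn⟩
      refine ⟨sRefl α μ, ⟨R.simple_refl_pos hα hμp hμα, ?_⟩, sRefl_sRefl α μ⟩
      rw [← hapinv]
      exact hμn
  constructor
  · intro hαv
    ext μ
    constructor
    · rintro ⟨hμp, hμn⟩
      by_cases hμα : μ = α
      · exact Or.inl hμα
      · exact Or.inr ((himg μ).mpr ⟨hμp, hμα, hμn⟩)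
    · rintro (hμα | hμ)
      · rw [Set.mem_singleton_iff] at hμα
        rw [hμα]
        exact hαv
      · obtain ⟨hμp, _, hμn⟩ := (himg μ).mp hμ
        exact ⟨hμp, hμn⟩
  · intro hαv
    ext μ
    constructor
    · rintro ⟨hμp, hμn⟩
      refine (himg μ).mpr ⟨hμp, ?_, hμn⟩
      rintro rfl
      exact hαv ⟨hμp, hμn⟩
    · intro hμ
      obtain ⟨hμp, _, hμn⟩ := (himg μ).mp hμ
      exact ⟨hμp, hμn⟩
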